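/- arXiv:2012.07054 — 3 statements merged into one kernel-verified Lean document; each statement's English description precedes it below -/
import Mathlib

section
/- Let f : ℝⁿ → ℝ be convex, differentiable, and μ-smooth with μ > 0, let A be an n×d real matrix, and λ > 0. Then the primal problem min_x f(Ax) + (λ/2)‖x‖² has a unique minimizer x*, the Fenchel dual problem min_z f*(z) + (1/(2λ))‖Aᵀz‖² has a unique minimizer z*, and these are related by x* = -(1/λ)Aᵀz* and z* = ∇f(Ax*). -/
open scoped RealInnerProductSpace
open Matrix MeasureTheory ProbabilityTheory

noncomputable section

abbrev EuclR (n : ℕ) := EuclideanSpace ℝ (Fin n)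

def matVec {p q : ℕ} (M : Matrix (Fin p) (Fin q) ℝ) (x : EuclR q) : EuclR p :=
  Matrix.toEuclideanLin M x

def matCLM {p q : ℕ} (M : Matrix (Fin p) (Fin q) ℝ) : EuclR q →L[ℝ] EuclR p :=
  LinearMap.toContinuousLinearMap (Matrix.toEuclideanLin M)

def ranM {p q : ℕ} (M : Matrix (Fin p) (Fin q) ℝ) : Submodule ℝ (EuclR p) :=
  LinearMap.range (Matrix.toEuclideanLin M)

def projOn {p : ℕ} (K : Submodule ℝ (EuclR p)) (x : EuclR p) : EuclR p :=
  (K.orthogonalProjectionOnto x : EuclR p)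

def perpCLM {p : ℕ} (K : Submodule ℝ (EuclR p)) : EuclR p →L[ℝ] EuclR p :=
  ContinuousLinearMap.id ℝ (EuclR p) - K.subtypeL.comp (K.orthogonalProjectionOnto)

def fconj {p : ℕ} (f : EuclR p → ℝ) (z : EuclR p) : EReal :=
  ⨆ w : EuclR p, ((⟪w, z⟫ - f w : ℝ) : EReal)

def fdom {p : ℕ} (f : EuclR p → ℝ) : Set (EuclR p) := {z | fconj f z ≠ ⊤}

def tcone {p : ℕ} (f : EuclR p → ℝ) (z : EuclR p) : Set (EuclR p) :=
  {Δ | ∃ t : ℝ, 0 ≤ t ∧ ∃ y ∈ fdom f, Δ = t • (y - z)}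

def ZfVal {n d m : ℕ} (f : EuclR n → ℝ) (zs : EuclR n)
    (A : Matrix (Fin n) (Fin d) ℝ) (S : Matrix (Fin d) (Fin m) ℝ) : ℝ :=
  sSup ((fun Δ => ‖matVec Aᵀ Δ - projOn (ranM S) (matVec Aᵀ Δ)‖) ''
    (tcone f zs ∩ Metric.closedBall 0 1))

/-- Gradient inequality for convex differentiable functions. -/
lemma grad_ineq {p : ℕ} {f : EuclR p → ℝ}
    (hconv : ConvexOn ℝ Set.univ f) {x g : EuclR p}
    (hx : HasGradientAt f g x) (w : EuclR p) :
    f x + ⟪g, w - x⟫ ≤ f w := by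
  set v := w - x with hv
  have hc : HasDerivAt (fun t : ℝ => x + t • v) v 0 := by
    simpa using ((hasDerivAt_id (0:ℝ)).smul_const v).const_add x
  have hfd : HasFDerivAt f (InnerProductSpace.toDual ℝ _ g) ((fun t : ℝ => x + t • v) 0) := by
    simpa using hasGradientAt_iff_hasFDerivAt.mp hx
  have hφ : HasDerivAt (fun t : ℝ => f (x + t • v)) ⟪g, v⟫ 0 := by
    have h := hfd.comp_hasDerivAt 0 hc
    simp only [Function.comp_def, InnerProductSpace.toDual_apply_apply] at h
    exact h
  have htd : Filter.Tendsto (slope (fun t : ℝ => f (x + t • v)) 0)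
      (nhdsWithin 0 (Set.Ioi 0)) (nhds ⟪g, v⟫) :=
    ((hasDerivAt_iff_tendsto_slope).mp hφ).mono_left
      (nhdsWithin_mono _ (fun t ht => ne_of_gt ht))
  have hbound : ∀ᶠ t in nhdsWithin (0:ℝ) (Set.Ioi 0),
      slope (fun t : ℝ => f (x + t • v)) 0 t ≤ f w - f x := by
    filter_upwards [Ioc_mem_nhdsGT_of_mem (Set.mem_Ico.mpr ⟨le_refl 0, one_pos⟩)] with t ht
    obtain ⟨ht0, ht1⟩ := ht
    have hx' : x + t • v = (1 - t) • x + t • w := by rw [hv]; module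
    have hcv := hconv.2 (Set.mem_univ x) (Set.mem_univ w) (by linarith : (0:ℝ) ≤ 1 - t)
      (le_of_lt ht0) (by ring)
    rw [slope_def_field, hx']
    simp only [smul_eq_mul] at hcv
    have h0 : f (x + (0:ℝ) • v) = f x := by norm_num
    rw [h0, sub_zero, div_le_iff₀ ht0]
    nlinarith
  have := le_of_tendsto htd hbound
  linarith

/-- Derivative of a quadratic term. -/
lemma sq_deriv {p : ℕ} (c : ℝ) (x0 : EuclR p) :
    HasFDerivAt (fun x : EuclR p => c / 2 * ‖x‖ ^ 2)
      (InnerProductSpace.toDual ℝ _ (c • x0)) x0 := by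
  have hfun : (fun x : EuclR p => c / 2 * ‖x‖ ^ 2) = fun x => c / 2 * ⟪x, x⟫ := by
    funext x; rw [real_inner_self_eq_norm_sq]
  rw [hfun]
  have h1 : HasFDerivAt (fun x : EuclR p => ⟪x, x⟫)
      ((2 : ℝ) • (InnerProductSpace.toDual ℝ _ x0)) x0 := by
    have h := HasFDerivAt.inner ℝ (hasFDerivAt_id x0) (hasFDerivAt_id x0)
    refine h.congr_fderiv (Eq.symm ?_)
    ext v
    simp [fderivInnerCLM_apply, real_inner_comm, two_smul, mul_comm]
  have h2 := h1.const_mul (c / 2)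
  refine h2.congr_fderiv (Eq.symm ?_)
  ext v
  simp [InnerProductSpace.toDual_apply_apply, real_inner_smul_left]
  ring

/-- A point where Fenchel–Young holds with equality is the gradient point. -/
lemma subgrad_eq {p : ℕ} {f : EuclR p → ℝ} {w0 z g : EuclR p}
    (hg : HasGradientAt f g w0)
    (h : ∀ w, ⟪w, z⟫ - f w ≤ ⟪w0, z⟫ - f w0) : z = g := by
  set T : EuclR p →L[ℝ] ℝ := InnerProductSpace.toDual ℝ _ z with hT
  have hmin : IsLocalMin (fun w => f w - T w) w0 := by
    apply Filter.Eventually.of_forall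
    intro w
    have h1 := h w
    have e1 : T w = ⟪w, z⟫ := real_inner_comm w z
    have e2 : T w0 = ⟪w0, z⟫ := real_inner_comm w0 z
    simp only [e1, e2]
    linarith
  have hder : HasFDerivAt (fun w => f w - T w)
      (InnerProductSpace.toDual ℝ _ g - T) w0 :=
    (hasGradientAt_iff_hasFDerivAt.mp hg).sub T.hasFDerivAt
  have h0 := hmin.hasFDerivAt_eq_zero hder
  have : InnerProductSpace.toDual ℝ (EuclR p) g = InnerProductSpace.toDual ℝ _ z := by
    rw [← hT]; exact sub_eq_zero.mp h0
  have := (InnerProductSpace.toDual ℝ (EuclR p)).injective this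
  exact this.symm

lemma adj_inner {p q : ℕ} (A : Matrix (Fin p) (Fin q) ℝ) (x : EuclR q) (z : EuclR p) :
    ⟪matVec A x, z⟫ = ⟪x, matVec Aᵀ z⟫ := by
  simp only [matVec, Matrix.toEuclideanLin_apply, PiLp.inner_apply, RCLike.inner_apply,
    conj_trivial]
  simp only [Matrix.mulVec_transpose]
  have h := Matrix.dotProduct_mulVec ((WithLp.equiv 2 (Fin p → ℝ)) z) A
    ((WithLp.equiv 2 (Fin q → ℝ)) x)
  simpa [dotProduct, mul_comm] using h

set_option maxHeartbeats 2000000 in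
/-- existence/uniqueness of primal and dual solutions and KKT relations. -/
theorem primal_dual_fenchel (n d : ℕ) (f : EuclR n → ℝ) (μ lam : ℝ)
    (hμ : 0 < μ) (hlam : 0 < lam)
    (hconv : ConvexOn ℝ Set.univ f)
    (hdiff : ∀ x, HasGradientAt f (gradient f x) x)
    (hsmooth : ∀ x y, ‖gradient f y - gradient f x‖ ≤ μ * ‖y - x‖)
    (A : Matrix (Fin n) (Fin d) ℝ) :
    ∃ xs : EuclR d, ∃ zs : EuclR n,
      (∀ x, f (matVec A xs) + lam / 2 * ‖xs‖ ^ 2 ≤ f (matVec A x) + lam / 2 * ‖x‖ ^ 2) ∧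
      (∀ x, (∀ x', f (matVec A x) + lam / 2 * ‖x‖ ^ 2 ≤ f (matVec A x') + lam / 2 * ‖x'‖ ^ 2)
          → x = xs) ∧
      (∀ z, fconj f zs + ((1 / (2 * lam) * ‖matVec Aᵀ zs‖ ^ 2 : ℝ) : EReal)
          ≤ fconj f z + ((1 / (2 * lam) * ‖matVec Aᵀ z‖ ^ 2 : ℝ) : EReal)) ∧
      (∀ z, (∀ z', fconj f z + ((1 / (2 * lam) * ‖matVec Aᵀ z‖ ^ 2 : ℝ) : EReal)
          ≤ fconj f z' + ((1 / (2 * lam) * ‖matVec Aᵀ z'‖ ^ 2 : ℝ) : EReal)) → z = zs) ∧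
      xs = (-(1 / lam)) • matVec Aᵀ zs ∧
      zs = gradient f (matVec A xs) := by
  classical
  set P : EuclR d → ℝ := fun x => f (matVec A x) + lam / 2 * ‖x‖ ^ 2 with hPdef
  have hmv : ∀ x : EuclR d, matVec A x = matCLM A x := fun _ => rfl
  have hfc : Continuous f :=
    continuous_iff_continuousAt.mpr fun x => (hdiff x).differentiableAt.continuousAt
  have hPc : Continuous P := by
    apply Continuous.add
    · exact hfc.comp (by simpa [funext hmv] using (matCLM A).continuous)
    · exact continuous_const.mul ((continuous_norm).pow 2)
  -- coercivity
  have hA0 : matVec A (0 : EuclR d) = 0 := by simp [matVec]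
  have hP0 : P 0 = f 0 := by simp [hPdef, hA0]
  set C : ℝ := ‖gradient f 0‖ * ‖matCLM A‖ with hC
  have hCnn : 0 ≤ C := mul_nonneg (norm_nonneg _) (norm_nonneg _)
  have hcoer : ∀ x : EuclR d, 2 * C / lam ≤ ‖x‖ → P 0 ≤ P x := by
    intro x hR
    have hgi := grad_ineq hconv (hdiff 0) (matVec A x)
    have hinner : -(‖gradient f 0‖ * ‖matVec A x‖) ≤ ⟪gradient f 0, matVec A x - 0⟫ := by
      rw [sub_zero]
      have := abs_real_inner_le_norm (gradient f 0) (matVec A x)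
      cases' abs_le.mp this with h1 h2
      linarith
    have hAx : ‖matVec A x‖ ≤ ‖matCLM A‖ * ‖x‖ := by
      rw [hmv]; exact (matCLM A).le_opNorm x
    have h1 : f 0 - C * ‖x‖ ≤ f (matVec A x) := by
      have : ‖gradient f 0‖ * ‖matVec A x‖ ≤ C * ‖x‖ := by
        rw [hC, mul_assoc]
        exact mul_le_mul_of_nonneg_left hAx (norm_nonneg _)
      linarith
    have h2 : 2 * C ≤ lam * ‖x‖ := by
      rw [div_le_iff₀ hlam] at hR; linarith [hR]
    have h3 : 0 ≤ lam / 2 * ‖x‖ ^ 2 - C * ‖x‖ := by nlinarith [norm_nonneg x]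
    rw [hP0, hPdef]
    simp only
    linarith
  obtain ⟨xs, hxs⟩ : ∃ xs, ∀ x, P xs ≤ P x := by
    apply hPc.exists_forall_le' 0
    have : {x : EuclR d | P 0 ≤ P x} ∈ Filter.cocompact (EuclR d) := by
      rw [Filter.mem_cocompact']
      refine ⟨Metric.closedBall 0 (2 * C / lam), isCompact_closedBall _ _, ?_⟩
      intro x hx
      simp only [Set.mem_compl_iff, Set.mem_setOf_eq, not_le] at hx
      rw [Metric.mem_closedBall, dist_zero_right]
      by_contra hcon
      push_neg at hcon
      exact absurd (hcoer x (le_of_lt hcon)) (not_le.mpr hx)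
    exact this
  -- derivative of P
  have hPd : ∀ x0 : EuclR d, HasFDerivAt P
      (InnerProductSpace.toDual ℝ _ (matVec Aᵀ (gradient f (matVec A x0)) + lam • x0)) x0 := by
    intro x0
    have hf := hasGradientAt_iff_hasFDerivAt.mp (hdiff (matVec A x0))
    have h1 : HasFDerivAt (fun x : EuclR d => f (matVec A x))
        ((InnerProductSpace.toDual ℝ _ (gradient f (matVec A x0))).comp (matCLM A)) x0 :=
      HasFDerivAt.comp x0 hf (matCLM A).hasFDerivAt
    have h3 := h1.add (sq_deriv lam x0)
    refine h3.congr_fderiv (Eq.symm ?_)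
    ext v
    simp only [InnerProductSpace.toDual_apply_apply, ContinuousLinearMap.add_apply,
      ContinuousLinearMap.coe_comp', Function.comp_apply, inner_add_left]
    congr 1
    rw [real_inner_comm, ← adj_inner, ← hmv, real_inner_comm]
  have hloc : IsLocalMin P xs := Filter.Eventually.of_forall hxs
  have h0 := hloc.hasFDerivAt_eq_zero (hPd xs)
  set zs : EuclR n := gradient f (matVec A xs) with hzs
  set u : EuclR d := matVec Aᵀ zs + lam • xs with hu
  have hker : u = 0 := by
    have happ := congrArg (fun L : EuclR d →L[ℝ] ℝ => L u) h0
    simp only [InnerProductSpace.toDual_apply_apply, ContinuousLinearMap.zero_apply] at happ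
    exact inner_self_eq_zero.mp happ
  have hker' : matVec Aᵀ zs + lam • xs = 0 := hker
  have hzs' : zs = gradient f (matVec A xs) := hzs
  clear_value u
  clear_value zs
  have hxz : xs = (-(1 / lam)) • matVec Aᵀ zs := by
    apply smul_right_injective (EuclR d) (ne_of_gt hlam)
    have h1 : lam • xs = -(matVec Aᵀ zs) := by
      rw [eq_neg_iff_add_eq_zero, add_comm]; exact hker'
    show lam • xs = lam • ((-(1 / lam)) • matVec Aᵀ zs)
    rw [h1, smul_smul]
    rw [show lam * -(1 / lam) = -1 by field_simp]
    module
  -- primal uniqueness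
  have huniq : ∀ x, (∀ x', P x ≤ P x') → x = xs := by
    intro x hx
    have hm : P x = P xs := le_antisymm (hx xs) (hxs x)
    set w : EuclR d := (1/2 : ℝ) • (x + xs) with hw
    have hAw : matVec A w = (1/2 : ℝ) • matVec A x + (1/2 : ℝ) • matVec A xs := by
      simp [hw, matVec, map_add, _root_.map_smul]
    have hcv := hconv.2 (Set.mem_univ (matVec A x)) (Set.mem_univ (matVec A xs))
      (by norm_num : (0:ℝ) ≤ 1/2) (by norm_num : (0:ℝ) ≤ 1/2) (by norm_num)
    simp only [smul_eq_mul] at hcv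
    have hfw : f (matVec A w) ≤ 1/2 * f (matVec A x) + 1/2 * f (matVec A xs) := by
      rw [hAw]; exact hcv
    have hn1 : ‖x + xs‖ ^ 2 = ‖x‖ ^ 2 + 2 * ⟪x, xs⟫ + ‖xs‖ ^ 2 := norm_add_sq_real x xs
    have hn2 : ‖x - xs‖ ^ 2 = ‖x‖ ^ 2 - 2 * ⟪x, xs⟫ + ‖xs‖ ^ 2 := norm_sub_sq_real x xs
    have hnw : ‖w‖ ^ 2 = (1/4 : ℝ) * ‖x + xs‖ ^ 2 := by
      rw [hw, norm_smul]
      simp [abs_of_nonneg]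
      ring
    have hPw := hxs w
    have hPw2 : P w = f (matVec A w) + lam / 2 * ‖w‖ ^ 2 := rfl
    have hPx : P x = f (matVec A x) + lam / 2 * ‖x‖ ^ 2 := rfl
    have hPxs : P xs = f (matVec A xs) + lam / 2 * ‖xs‖ ^ 2 := rfl
    have hpar : ‖x + xs‖ ^ 2 = 2 * ‖x‖ ^ 2 + 2 * ‖xs‖ ^ 2 - ‖x - xs‖ ^ 2 := by linarith
    have hw2 : lam / 2 * ‖w‖ ^ 2
        = lam / 4 * ‖x‖ ^ 2 + lam / 4 * ‖xs‖ ^ 2 - lam / 8 * ‖x - xs‖ ^ 2 := by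
      rw [hnw, hpar]; ring
    have hPw' : f (matVec A xs) + lam / 2 * ‖xs‖ ^ 2
        ≤ f (matVec A w) + lam / 2 * ‖w‖ ^ 2 := hPw
    have hm' : f (matVec A x) + lam / 2 * ‖x‖ ^ 2
        = f (matVec A xs) + lam / 2 * ‖xs‖ ^ 2 := hm
    have hmain : lam / 8 * ‖x - xs‖ ^ 2 ≤ lam / 8 * 0 := by
      linarith [hPw', hm', hfw, hw2]
    have hsq : ‖x - xs‖ ^ 2 ≤ 0 :=
      le_of_mul_le_mul_left hmain (by linarith : (0:ℝ) < lam / 8)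
    have hz0 : ‖x - xs‖ ^ 2 = 0 := le_antisymm hsq (sq_nonneg _)
    have : ‖x - xs‖ = 0 := by
      have := sq_eq_zero_iff.mp hz0
      exact this
    have := norm_eq_zero.mp this
    exact sub_eq_zero.mp this
  -- dual part
  set xz : EuclR n → EuclR d := fun z => (-(1 / lam)) • matVec Aᵀ z with hxzdef
  have hxs_eq : xs = xz zs := hxz
  have hconj_lb : ∀ (z w : EuclR n), ((⟪w, z⟫ - f w : ℝ) : EReal) ≤ fconj f z :=
    fun z w => le_iSup (fun w => ((⟪w, z⟫ - f w : ℝ) : EReal)) w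
  have hFY : ∀ w, ⟪w, zs⟫ - f w ≤ ⟪matVec A xs, zs⟫ - f (matVec A xs) := by
    intro w
    have hgi := grad_ineq hconv (hdiff (matVec A xs)) w
    rw [← hzs] at hgi
    have h2 : ⟪zs, w - matVec A xs⟫ = ⟪w, zs⟫ - ⟪matVec A xs, zs⟫ := by
      rw [inner_sub_right, real_inner_comm zs w, real_inner_comm zs (matVec A xs)]
    linarith [h2 ▸ hgi]
  have hconj_zs : fconj f zs = ((⟪matVec A xs, zs⟫ - f (matVec A xs) : ℝ) : EReal) := by
    apply le_antisymm
    · exact iSup_le fun w => EReal.coe_le_coe_iff.mpr (hFY w)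
    · exact hconj_lb zs _
  -- the key quadratic nonnegativity
  have hquad : ∀ z : EuclR n,
      0 ≤ lam / 2 * ‖xs‖ ^ 2 + ⟪xs, matVec Aᵀ z⟫ + 1 / (2 * lam) * ‖matVec Aᵀ z‖ ^ 2 := by
    intro z
    have hns := norm_add_sq_real (lam • xs) (matVec Aᵀ z)
    have h1 : ‖lam • xs‖ ^ 2 = lam ^ 2 * ‖xs‖ ^ 2 := by
      rw [norm_smul, Real.norm_eq_abs, mul_pow, sq_abs]
    have h2 : ⟪lam • xs, matVec Aᵀ z⟫ = lam * ⟪xs, matVec Aᵀ z⟫ := real_inner_smul_left _ _ _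
    have heq : lam / 2 * ‖xs‖ ^ 2 + ⟪xs, matVec Aᵀ z⟫ + 1 / (2 * lam) * ‖matVec Aᵀ z‖ ^ 2
        = ‖lam • xs + matVec Aᵀ z‖ ^ 2 / (2 * lam) := by
      rw [hns, h1, h2]
      field_simp
    rw [heq]
    exact div_nonneg (sq_nonneg _) (by linarith)
  have hquad_eq : ∀ z : EuclR n,
      lam / 2 * ‖xs‖ ^ 2 + ⟪xs, matVec Aᵀ z⟫ + 1 / (2 * lam) * ‖matVec Aᵀ z‖ ^ 2 = 0
        → matVec Aᵀ z = matVec Aᵀ zs := by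
    intro z hzq
    have hns := norm_add_sq_real (lam • xs) (matVec Aᵀ z)
    have h1 : ‖lam • xs‖ ^ 2 = lam ^ 2 * ‖xs‖ ^ 2 := by
      rw [norm_smul, Real.norm_eq_abs, mul_pow, sq_abs]
    have h2 : ⟪lam • xs, matVec Aᵀ z⟫ = lam * ⟪xs, matVec Aᵀ z⟫ := real_inner_smul_left _ _ _
    have hn0 : ‖lam • xs + matVec Aᵀ z‖ ^ 2 = 0 := by
      rw [hns, h1, h2]
      have hc : 2 * lam * (1 / (2 * lam)) = 1 := by
        field_simp
      linear_combination (2 * lam) * hzq - ‖matVec Aᵀ z‖ ^ 2 * hc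
    have hv0 : lam • xs + matVec Aᵀ z = 0 := by
      have := sq_eq_zero_iff.mp hn0
      exact norm_eq_zero.mp this
    have hv1 : lam • xs + matVec Aᵀ zs = 0 := by
      rw [add_comm]; exact hker'
    have := hv0.trans hv1.symm
    exact add_left_cancel this
  -- useful: adjoint identity for xs
  have hadjxs : ∀ z : EuclR n, ⟪matVec A xs, z⟫ = ⟪xs, matVec Aᵀ z⟫ := fun z => adj_inner A xs z
  have hlhs : ⟪matVec A xs, zs⟫ - f (matVec A xs) + 1 / (2 * lam) * ‖matVec Aᵀ zs‖ ^ 2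
      = -(f (matVec A xs) + lam / 2 * ‖xs‖ ^ 2) := by
    have hq0 : lam / 2 * ‖xs‖ ^ 2 + ⟪xs, matVec Aᵀ zs⟫ + 1 / (2 * lam) * ‖matVec Aᵀ zs‖ ^ 2
        = 0 := by
      have hv1 : matVec Aᵀ zs = -(lam • xs) := by
        rw [eq_neg_iff_add_eq_zero]; exact hker'
      rw [hv1]
      have h2 : ⟪xs, -(lam • xs)⟫ = -(lam * ‖xs‖ ^ 2) := by
        rw [inner_neg_right, real_inner_smul_right, real_inner_self_eq_norm_sq]
      have h3 : ‖-(lam • xs)‖ ^ 2 = lam ^ 2 * ‖xs‖ ^ 2 := by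
        rw [norm_neg, norm_smul, Real.norm_eq_abs, mul_pow, sq_abs]
      rw [h2, h3]
      field_simp
      ring
    have := hadjxs zs
    linarith
  have hdual_opt : ∀ z, fconj f zs + ((1 / (2 * lam) * ‖matVec Aᵀ zs‖ ^ 2 : ℝ) : EReal)
      ≤ fconj f z + ((1 / (2 * lam) * ‖matVec Aᵀ z‖ ^ 2 : ℝ) : EReal) := by
    intro z
    rw [hconj_zs, ← EReal.coe_add, hlhs]
    calc ((-(f (matVec A xs) + lam / 2 * ‖xs‖ ^ 2) : ℝ) : EReal)
        ≤ ((⟪matVec A xs, z⟫ - f (matVec A xs)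
            + 1 / (2 * lam) * ‖matVec Aᵀ z‖ ^ 2 : ℝ) : EReal) := by
          apply EReal.coe_le_coe_iff.mpr
          have := hquad z
          have := hadjxs z
          linarith
      _ = ((⟪matVec A xs, z⟫ - f (matVec A xs) : ℝ) : EReal)
            + ((1 / (2 * lam) * ‖matVec Aᵀ z‖ ^ 2 : ℝ) : EReal) := by
          rw [← EReal.coe_add]
      _ ≤ fconj f z + ((1 / (2 * lam) * ‖matVec Aᵀ z‖ ^ 2 : ℝ) : EReal) :=
          add_le_add_left (hconj_lb z _) _
  have hdual_uniq : ∀ z, (∀ z', fconj f z + ((1 / (2 * lam) * ‖matVec Aᵀ z‖ ^ 2 : ℝ) : EReal)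
      ≤ fconj f z' + ((1 / (2 * lam) * ‖matVec Aᵀ z'‖ ^ 2 : ℝ) : EReal)) → z = zs := by
    intro z hz
    have hDzs : fconj f zs + ((1 / (2 * lam) * ‖matVec Aᵀ zs‖ ^ 2 : ℝ) : EReal)
        = ((-(f (matVec A xs) + lam / 2 * ‖xs‖ ^ 2) : ℝ) : EReal) := by
      rw [hconj_zs, ← EReal.coe_add, hlhs]
    have he1 : fconj f z + ((1 / (2 * lam) * ‖matVec Aᵀ z‖ ^ 2 : ℝ) : EReal)
        = ((-(f (matVec A xs) + lam / 2 * ‖xs‖ ^ 2) : ℝ) : EReal) := by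
      rw [← hDzs]
      exact le_antisymm (hz zs) (hdual_opt z)
    have hne_bot : fconj f z ≠ ⊥ := by
      intro h
      have := hconj_lb z 0
      rw [h, le_bot_iff] at this
      exact EReal.coe_ne_bot _ this
    have hne_top : fconj f z ≠ ⊤ := by
      intro h
      rw [h, EReal.top_add_of_ne_bot (EReal.coe_ne_bot _)] at he1
      exact EReal.top_ne_coe _ he1
    set r : ℝ := (fconj f z).toReal with hrdef
    have hr : fconj f z = (r : EReal) := (EReal.coe_toReal hne_top hne_bot).symm
    clear_value r
    rw [hr, ← EReal.coe_add] at he1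
    have he1' : r + 1 / (2 * lam) * ‖matVec Aᵀ z‖ ^ 2
        = -(f (matVec A xs) + lam / 2 * ‖xs‖ ^ 2) := EReal.coe_eq_coe_iff.mp he1
    have hge : ⟪matVec A xs, z⟫ - f (matVec A xs) ≤ r := by
      have := hconj_lb z (matVec A xs)
      rw [hr] at this
      exact EReal.coe_le_coe_iff.mp this
    have hq0 : lam / 2 * ‖xs‖ ^ 2 + ⟪xs, matVec Aᵀ z⟫ + 1 / (2 * lam) * ‖matVec Aᵀ z‖ ^ 2
        = 0 := by
      have h1 := hquad z
      have h2 := hadjxs z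
      linarith
    have hAtz : matVec Aᵀ z = matVec Aᵀ zs := hquad_eq z hq0
    have hr_val : r = ⟪matVec A xs, z⟫ - f (matVec A xs) := by
      have h1 := hadjxs z
      have h2 := hadjxs zs
      have h3 : ⟪xs, matVec Aᵀ z⟫ = ⟪xs, matVec Aᵀ zs⟫ := by rw [hAtz]
      have hc : (1 : ℝ) / (2 * lam) * ‖matVec Aᵀ z‖ ^ 2
          = 1 / (2 * lam) * ‖matVec Aᵀ zs‖ ^ 2 := by rw [hAtz]
      linear_combination he1' - hlhs - hc + h2 - h3 - h1
    have hsub : ∀ w, ⟪w, z⟫ - f w ≤ ⟪matVec A xs, z⟫ - f (matVec A xs) := by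
      intro w
      have := hconj_lb z w
      rw [hr] at this
      have := EReal.coe_le_coe_iff.mp this
      linarith [hr_val]
    rw [hzs]
    exact subgrad_eq (hdiff (matVec A xs)) hsub
  exact ⟨xs, zs, hxs, huniq, hdual_opt, hdual_uniq, hxz, hzs'⟩
end
end

section
/- Let x, y ∈ ℝⁿ and β > 0 satisfy β·⟨x, y⟩ > ‖y‖². Then there exists a symmetric matrix H with 0 ≺ H ⪯ β·I and y = Hx. -/
open scoped RealInnerProductSpace
open Matrix MeasureTheory ProbabilityTheory

noncomputable section

/-- existence of a symmetric matrix 0 ≺ H ⪯ βI mapping x to y. -/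
theorem exists_symmetric_map (p : ℕ) (x y : EuclR p) (β : ℝ) (hβ : 0 < β)
    (h : ‖y‖ ^ 2 < β * ⟪x, y⟫) :
    ∃ H : Matrix (Fin p) (Fin p) ℝ,
      H.IsSymm ∧ H.PosDef ∧ (β • (1 : Matrix (Fin p) (Fin p) ℝ) - H).PosSemidef ∧
      matVec H x = y := by
  have hxy : 0 < ⟪x, y⟫ := by nlinarith [sq_nonneg ‖y‖]
  have hy0 : y ≠ 0 := by intro hy; rw [hy] at hxy; simp at hxy
  have hx0 : x ≠ 0 := by intro hx; rw [hx] at hxy; simp at hxy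
  have hyn : 0 < ‖y‖ := norm_pos_iff.mpr hy0
  have hxn : 0 < ‖x‖ := norm_pos_iff.mpr hx0
  have hCS : ⟪x, y⟫ ≤ ‖x‖ * ‖y‖ := real_inner_le_norm x y
  have hylt : ‖y‖ < β * ‖x‖ := by nlinarith
  set v : Fin p → ℝ := fun i => y i - β * x i with hvdef
  set c : ℝ := ⟪x, y⟫ - β * ‖x‖ ^ 2 with hcdef
  have hc : c < 0 := by rw [hcdef]; nlinarith
  have hcne : c ≠ 0 := ne_of_lt hc
  have hcinv : c⁻¹ < 0 := inv_lt_zero.mpr hc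
  have hinner : ∀ a b : EuclR p, ⟪a, b⟫ = ∑ i, a i * b i := by
    intro a b; rw [PiLp.inner_apply]; simp [RCLike.inner_apply]
    exact Finset.sum_congr rfl fun i _ => mul_comm _ _
  have hnormx : ‖x‖ ^ 2 = ∑ i, x i * x i := by
    rw [← real_inner_self_eq_norm_sq, hinner]
  have hnormy : ‖y‖ ^ 2 = ∑ i, y i * y i := by
    rw [← real_inner_self_eq_norm_sq, hinner]
  have hcsum : c = ∑ i, v i * x i := by
    rw [hcdef, hinner, hnormx, Finset.mul_sum, ← Finset.sum_sub_distrib]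
    congr 1; ext i; simp [hvdef]; ring
  have hkey : ∑ i, v i * v i < β * (-c) := by
    have h1 : ∑ i, v i * v i
        = ∑ i, (y i * y i - 2 * β * (x i * y i) + β ^ 2 * (x i * x i)) := by
      congr 1; ext i; simp [hvdef]; ring
    rw [h1, Finset.sum_add_distrib, Finset.sum_sub_distrib, ← Finset.mul_sum, ← Finset.mul_sum,
      ← hnormy, ← hnormx]
    have hxys : ⟪x, y⟫ = ∑ i, x i * y i := hinner x y
    rw [hcdef]; nlinarith
  set M : Matrix (Fin p) (Fin p) ℝ :=
    β • (1 : Matrix (Fin p) (Fin p) ℝ) + c⁻¹ • Matrix.vecMulVec v v with hM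
  have hVsym : (Matrix.vecMulVec v v)ᵀ = Matrix.vecMulVec v v := by
    ext i j; simp [Matrix.vecMulVec_apply, mul_comm]
  have hsym : M.IsSymm := by
    show Mᵀ = M
    rw [hM, Matrix.transpose_add, Matrix.transpose_smul, Matrix.transpose_smul,
      Matrix.transpose_one, hVsym]
  -- mulVec formula
  have hmv : ∀ (w : Fin p → ℝ) (i : Fin p),
      (M *ᵥ w) i = β * w i + c⁻¹ * (v i * ∑ j, v j * w j) := by
    intro w i
    simp only [hM, Matrix.mulVec, dotProduct, Matrix.add_apply, Matrix.smul_apply,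
      Matrix.one_apply, Matrix.vecMulVec_apply, smul_eq_mul, add_mul, mul_ite, mul_one, mul_zero,
      ite_mul, zero_mul, Finset.sum_add_distrib, Finset.sum_ite_eq, Finset.mem_univ, if_true]
    rw [Finset.mul_sum, Finset.mul_sum]
    congr 1
    congr 1; ext j; ring
  have hquad : ∀ w : Fin p → ℝ,
      w ⬝ᵥ (M *ᵥ w) = β * (∑ i, w i * w i) + c⁻¹ * (∑ i, v i * w i) ^ 2 := by
    intro w
    simp only [dotProduct]
    have : ∀ i, w i * (M *ᵥ w) i
        = β * (w i * w i) + c⁻¹ * ((∑ j, v j * w j) * (v i * w i)) := by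
      intro i; rw [hmv]; ring
    rw [Finset.sum_congr rfl fun i _ => this i, Finset.sum_add_distrib, ← Finset.mul_sum,
      ← Finset.mul_sum, ← Finset.mul_sum]
    ring
  have hherm : M.IsHermitian := by
    rw [Matrix.IsHermitian, Matrix.conjTranspose_eq_transpose_of_trivial, hsym]
  refine ⟨M, hsym, posDef_iff_dotProduct_mulVec.mpr ⟨hherm, ?_⟩,
    posSemidef_iff_dotProduct_mulVec.mpr ⟨?_, ?_⟩, ?_⟩
  · intro w hw
    have hsw : star w = w := by simp
    rw [hsw, hquad w]
    have hCS2 : (∑ i, v i * w i) ^ 2 ≤ (∑ i, v i * v i) * (∑ i, w i * w i) := by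
      have := Finset.sum_mul_sq_le_sq_mul_sq Finset.univ v w
      simpa [sq] using this
    have hw2 : 0 < ∑ i, w i * w i := by
      obtain ⟨i, hi⟩ : ∃ i, w i ≠ 0 := by
        by_contra hx; push_neg at hx; exact hw (funext hx)
      exact Finset.sum_pos' (fun i _ => mul_self_nonneg _)
        ⟨i, Finset.mem_univ i, mul_self_pos.mpr hi⟩
    have h1 : (∑ i, v i * w i) ^ 2 < β * (-c) * (∑ i, w i * w i) :=
      lt_of_le_of_lt hCS2 (mul_lt_mul_of_pos_right hkey hw2)
    have e2 : c⁻¹ * (β * (-c) * (∑ i, w i * w i)) < c⁻¹ * (∑ i, v i * w i) ^ 2 := by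
      have := mul_lt_mul_of_neg_left h1 hcinv
      linarith
    have e1 : c⁻¹ * (β * (-c) * (∑ i, w i * w i)) = -(β * (∑ i, w i * w i)) := by
      field_simp
    linarith
  · rw [Matrix.IsHermitian, Matrix.conjTranspose_eq_transpose_of_trivial,
      Matrix.transpose_sub, Matrix.transpose_smul, Matrix.transpose_one, hsym]
  · intro w
    have hsw : star w = w := by simp
    have hsub : (β • (1 : Matrix (Fin p) (Fin p) ℝ) - M) *ᵥ w
        = β • ((1 : Matrix (Fin p) (Fin p) ℝ) *ᵥ w) - M *ᵥ w := by
      rw [Matrix.sub_mulVec, Matrix.smul_mulVec]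
    rw [hsw, hsub]
    have hdot : w ⬝ᵥ (β • ((1 : Matrix (Fin p) (Fin p) ℝ) *ᵥ w) - M *ᵥ w)
        = β * (∑ i, w i * w i) - w ⬝ᵥ (M *ᵥ w) := by
      rw [dotProduct_sub, dotProduct_smul, Matrix.one_mulVec]
      simp [dotProduct, smul_eq_mul]
    rw [hdot, hquad w]
    have : 0 ≤ (-c⁻¹) * (∑ i, v i * w i) ^ 2 :=
      mul_nonneg (by linarith) (sq_nonneg _)
    linarith
  · -- matVec M x = y
    unfold matVec
    apply PiLp.ext
    intro i
    have hcoord : (Matrix.toEuclideanLin M x) i = (M *ᵥ (WithLp.equiv 2 (Fin p → ℝ) x)) i := rfl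
    rw [hcoord]
    have hvx : ∑ j, v j * (WithLp.equiv 2 (Fin p → ℝ) x) j = c := by
      rw [hcsum]; rfl
    rw [hmv, hvx]
    have hxi : (WithLp.equiv 2 (Fin p → ℝ) x) i = x i := rfl
    rw [hxi]
    field_simp
    simp [hvdef]
end
end

section
/- Let g : ℝⁿ → ℝ be convex such that for two points y*, z* there exist subgradients g_y ∈ ∂g(y*) and g_z ∈ ∂g(z*) with ‖g_y - g_z‖² ≤ (1/γ)·⟨g_y - g_z, y* - z*⟩ and (1/μ)·‖y* - z*‖² ≤ ⟨g_y - g_z, y* - z*⟩ for constants γ, μ > 0. Then there exists a symmetric matrix H with 0 ≺ H ⪯ (2/γ)·I such that g_y - g_z = H(y* - z*). -/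
open scoped RealInnerProductSpace
open Matrix MeasureTheory ProbabilityTheory

noncomputable section

private lemma dot_self_nonneg' {p : ℕ} (v : Fin p → ℝ) : 0 ≤ v ⬝ᵥ v :=
  Finset.sum_nonneg fun i _ => mul_self_nonneg (v i)

private lemma dot_self_pos {p : ℕ} {v : Fin p → ℝ} (hv : v ≠ 0) : 0 < v ⬝ᵥ v := by
  rcases lt_or_eq_of_le (dot_self_nonneg' v) with h | h
  · exact h
  · exfalso; apply hv
    have := (Finset.sum_eq_zero_iff_of_nonneg (fun i _ => mul_self_nonneg (v i))).1 h.symm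
    funext i
    have hi := this i (Finset.mem_univ i)
    have := mul_self_eq_zero.1 hi
    simpa using this

private lemma vecMulVec_mulVec' {p : ℕ} (a b v : Fin p → ℝ) :
    Matrix.vecMulVec a b *ᵥ v = (b ⬝ᵥ v) • a := by
  funext i
  simp only [Matrix.mulVec, Matrix.vecMulVec, dotProduct, Pi.smul_apply, smul_eq_mul,
    Matrix.of_apply, Finset.mul_sum]
  rw [Finset.sum_mul]
  exact Finset.sum_congr rfl fun j _ => by ring

private lemma dot_CS {p : ℕ} (a b : Fin p → ℝ) : (a ⬝ᵥ b) ^ 2 ≤ (a ⬝ᵥ a) * (b ⬝ᵥ b) := by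
  simpa [dotProduct, pow_two] using Finset.sum_mul_sq_le_sq_mul_sq Finset.univ a b

private lemma inner_eq_dot {p : ℕ} (a b : EuclR p) :
    ⟪a, b⟫ = (fun i => a i) ⬝ᵥ (fun i => b i) := by
  simp [PiLp.inner_apply, dotProduct, RCLike.inner_apply, mul_comm]

/-- Subgradient of a convex function at a point. -/
def subgradAt {p : ℕ} (g : EuclR p → ℝ) (x v : EuclR p) : Prop :=
  ∀ z, g x + ⟪v, z - x⟫ ≤ g z

set_option maxHeartbeats 1000000 in
/-- a symmetric matrix 0 ≺ H ⪯ (2/γ)I relating subgradient differences to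
point differences (Lemma A.2). -/
theorem exists_symmetric_map_of_subgradients (p : ℕ) (g : EuclR p → ℝ)
    (hconv : ConvexOn ℝ Set.univ g) (γ μ : ℝ) (hγ : 0 < γ) (hμ : 0 < μ)
    (ys zs gy gz : EuclR p) (hgy : subgradAt g ys gy) (hgz : subgradAt g zs gz)
    (h1 : ‖gy - gz‖ ^ 2 ≤ (1 / γ) * ⟪gy - gz, ys - zs⟫)
    (h2 : (1 / μ) * ‖ys - zs‖ ^ 2 ≤ ⟪gy - gz, ys - zs⟫) :
    ∃ H : Matrix (Fin p) (Fin p) ℝ,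
      H.IsSymm ∧ H.PosDef ∧ ((2 / γ) • (1 : Matrix (Fin p) (Fin p) ℝ) - H).PosSemidef ∧
      matVec H (ys - zs) = gy - gz := by
  classical
  set X : Fin p → ℝ := fun i => (ys - zs) i with hXdef
  set Y : Fin p → ℝ := fun i => (gy - gz) i with hYdef
  have hinner : ⟪gy - gz, ys - zs⟫ = Y ⬝ᵥ X := inner_eq_dot _ _
  have hnx : ‖ys - zs‖ ^ 2 = X ⬝ᵥ X := by
    rw [← real_inner_self_eq_norm_sq]; exact inner_eq_dot _ _
  have hny : ‖gy - gz‖ ^ 2 = Y ⬝ᵥ Y := by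
    rw [← real_inner_self_eq_norm_sq]; exact inner_eq_dot _ _
  by_cases hx : ys - zs = 0
  · -- degenerate case: X = 0 hence Y = 0
    have hX0 : ⟪gy - gz, ys - zs⟫ = 0 := by rw [hx, inner_zero_right]
    have hy : gy - gz = 0 := by
      rw [hX0, mul_zero] at h1
      have : ‖gy - gz‖ = 0 := by nlinarith [norm_nonneg (gy - gz)]
      exact norm_eq_zero.1 this
    refine ⟨γ⁻¹ • 1, ?_, ?_, ?_, ?_⟩
    · simp [Matrix.IsSymm, Matrix.transpose_smul]
    · rw [Matrix.posDef_iff_dotProduct_mulVec]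
      constructor
      · simp [Matrix.IsHermitian]
      · intro v hv
        have := dot_self_pos hv
        simp only [Matrix.smul_mulVec, Matrix.one_mulVec, dotProduct_smul,
          smul_eq_mul, star_trivial]
        positivity
    · have : (2 / γ) • (1 : Matrix (Fin p) (Fin p) ℝ) - γ⁻¹ • 1 = γ⁻¹ • 1 := by
        rw [← sub_smul]; congr 1; field_simp; ring
      rw [this]
      rw [Matrix.posSemidef_iff_dotProduct_mulVec]
      constructor
      · simp [Matrix.IsHermitian]
      · intro v
        have := dot_self_nonneg' v
        simp only [Matrix.smul_mulVec, Matrix.one_mulVec, dotProduct_smul,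
          smul_eq_mul, star_trivial]
        positivity
    · rw [hx, hy]
      simp [matVec]
  · -- main case
    have hX : X ≠ 0 := by
      intro h
      apply hx
      ext i
      have := congrFun h i
      simpa [hXdef] using this
    set s : ℝ := X ⬝ᵥ X with hsdef
    set c : ℝ := Y ⬝ᵥ X with hcdef
    have hs : 0 < s := dot_self_pos hX
    have hc : 0 < c := by
      rw [hinner, hnx] at h2
      have : 0 < (1 / μ) * s := by positivity
      linarith
    have h1' : Y ⬝ᵥ Y ≤ γ⁻¹ * c := by
      rw [hny, hinner] at h1
      calc Y ⬝ᵥ Y ≤ (1 / γ) * c := h1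
        _ = γ⁻¹ * c := by rw [one_div]
    set H : Matrix (Fin p) (Fin p) ℝ :=
      c⁻¹ • Matrix.vecMulVec Y Y + γ⁻¹ • (1 - s⁻¹ • Matrix.vecMulVec X X) with hHdef
    have hmul : ∀ v : Fin p → ℝ,
        H *ᵥ v = (c⁻¹ * (Y ⬝ᵥ v)) • Y + γ⁻¹ • (v - (s⁻¹ * (X ⬝ᵥ v)) • X) := by
      intro v
      simp [hHdef, Matrix.add_mulVec, Matrix.smul_mulVec, Matrix.sub_mulVec,
        Matrix.one_mulVec, vecMulVec_mulVec', smul_smul]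
    have hform : ∀ v : Fin p → ℝ,
        v ⬝ᵥ H *ᵥ v = c⁻¹ * (Y ⬝ᵥ v) ^ 2 + γ⁻¹ * (v ⬝ᵥ v - s⁻¹ * (X ⬝ᵥ v) ^ 2) := by
      intro v
      rw [hmul]
      simp only [dotProduct_add, dotProduct_smul, dotProduct_sub, smul_eq_mul,
        dotProduct_comm v Y, dotProduct_comm v X]
      ring
    have hresid : ∀ v : Fin p → ℝ,
        v ⬝ᵥ v - s⁻¹ * (X ⬝ᵥ v) ^ 2 =
          (v - (s⁻¹ * (X ⬝ᵥ v)) • X) ⬝ᵥ (v - (s⁻¹ * (X ⬝ᵥ v)) • X) := by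
      intro v
      simp only [sub_dotProduct, dotProduct_sub, smul_dotProduct, dotProduct_smul,
        smul_eq_mul, dotProduct_comm X v, ← hsdef]
      field_simp
      ring
    have hsymm : H.IsSymm := by
      unfold Matrix.IsSymm
      ext i j
      simp [hHdef, Matrix.vecMulVec, Matrix.one_apply, Matrix.transpose_apply, eq_comm,
        mul_comm]
    have hherm : H.IsHermitian := by
      rw [Matrix.IsHermitian, Matrix.conjTranspose_eq_transpose_of_trivial]
      exact hsymm
    refine ⟨H, hsymm, Matrix.posDef_iff_dotProduct_mulVec.mpr ⟨hherm, ?_⟩,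
      Matrix.posSemidef_iff_dotProduct_mulVec.mpr ⟨?_, ?_⟩, ?_⟩
    · -- PosDef quadratic form
      intro v hv
      rw [star_trivial, hform, hresid v]
      set t : ℝ := s⁻¹ * (X ⬝ᵥ v) with htdef
      rcases eq_or_ne (v - t • X) 0 with hw | hw
      · have hvt : v = t • X := by rwa [sub_eq_zero] at hw
        have ht : t ≠ 0 := by
          intro h; apply hv; rw [hvt, h, zero_smul]
        have hyv : Y ⬝ᵥ v = t * c := by
          rw [hvt, dotProduct_smul, smul_eq_mul, ← hcdef]
        rw [hw, hyv]
        have : 0 < c⁻¹ * (t * c) ^ 2 := by positivity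
        simpa using this
      · have h1t : 0 < (v - t • X) ⬝ᵥ (v - t • X) := dot_self_pos hw
        have h2t : 0 ≤ c⁻¹ * (Y ⬝ᵥ v) ^ 2 := by positivity
        have h3t := mul_pos (inv_pos.2 hγ) h1t
        exact lt_of_lt_of_le h3t (le_add_of_nonneg_left h2t)
    · -- PosSemidef hermitian part
      rw [Matrix.IsHermitian, Matrix.conjTranspose_eq_transpose_of_trivial,
        Matrix.transpose_sub, Matrix.transpose_smul, Matrix.transpose_one, hsymm]
    · -- PosSemidef quadratic form
      intro v
      rw [star_trivial]
      simp only [Matrix.sub_mulVec, Matrix.smul_mulVec, Matrix.one_mulVec,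
        dotProduct_sub, dotProduct_smul, smul_eq_mul]
      rw [hform]
      have hCS : (Y ⬝ᵥ v) ^ 2 ≤ (Y ⬝ᵥ Y) * (v ⬝ᵥ v) := dot_CS Y v
      have hvv : 0 ≤ v ⬝ᵥ v := dot_self_nonneg' v
      have haux : c⁻¹ * (Y ⬝ᵥ v) ^ 2 ≤ γ⁻¹ * (v ⬝ᵥ v) := by
        have h3 : (Y ⬝ᵥ v) ^ 2 ≤ γ⁻¹ * c * (v ⬝ᵥ v) := by nlinarith
        have := mul_le_mul_of_nonneg_left h3 (le_of_lt (inv_pos.2 hc))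
        calc c⁻¹ * (Y ⬝ᵥ v) ^ 2 ≤ c⁻¹ * (γ⁻¹ * c * (v ⬝ᵥ v)) := this
          _ = γ⁻¹ * (v ⬝ᵥ v) := by field_simp
      have hx2 : 0 ≤ γ⁻¹ * (s⁻¹ * (X ⬝ᵥ v) ^ 2) := by positivity
      have hD : 2 / γ * (v ⬝ᵥ v) = γ⁻¹ * (v ⬝ᵥ v) + γ⁻¹ * (v ⬝ᵥ v) := by
        rw [div_eq_mul_inv]; ring
      have hE : γ⁻¹ * (v ⬝ᵥ v - s⁻¹ * (X ⬝ᵥ v) ^ 2) =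
          γ⁻¹ * (v ⬝ᵥ v) - γ⁻¹ * (s⁻¹ * (X ⬝ᵥ v) ^ 2) := by ring
      linarith [haux, hx2, hD, hE]
    · -- matVec
      have hHX : H *ᵥ X = Y := by
        rw [hmul, ← hcdef, ← hsdef, inv_mul_cancel₀ (ne_of_gt hc),
          inv_mul_cancel₀ (ne_of_gt hs)]
        all_goals simp
      unfold matVec
      rw [Matrix.toEuclideanLin_apply]
      have e1 : (ys - zs).ofLp = X := rfl
      have e2 : WithLp.toLp 2 Y = gy - gz := rfl
      rw [e1, hHX, e2]
end
end
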